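/- (Theorem 3, Nash equilibrium formula.) Suppose M : Fin N → ℝ satisfies M_i > 0 for all i and the first-order conditions (Σ_{j ≠ i} M_j)/(Σ_{j} M_j)² = a_i for every i. Then for every i, M_i = (N − 1)/(Σ_{j} a_j) − ((N − 1)/(Σ_{j} a_j))²·a_i. -/
import Mathlib


open Finset

/-- (Theorem 3, Nash equilibrium formula.) If `M i > 0` for all `i` and the
first-order conditions `(Σ_{j ≠ i} M j)/(Σ_j M j)² = a i` hold for every `i`,
where `a i = c·2^h/(B + r·s i)`, then for every `i`,
`M i = (N − 1)/(Σ_j a j) − ((N − 1)/(Σ_j a j))²·a i`. -/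
theorem nash_equilibrium_formula (N : ℕ) (hN : 2 ≤ N) (s : Fin N → ℝ) (hs : ∀ i, 0 < s i)
    (B r c h : ℝ) (hB : 0 < B) (hr : 0 < r) (hc : 0 < c)
    (a : Fin N → ℝ) (ha : ∀ i, a i = c * (2 : ℝ) ^ h / (B + r * s i))
    (M : Fin N → ℝ) (hM : ∀ i, 0 < M i)
    (hFOC : ∀ i, (∑ j ∈ univ \ {i}, M j) / (∑ j, M j) ^ 2 = a i) :
    ∀ i, M i = ((N : ℝ) - 1) / (∑ j, a j)
      - (((N : ℝ) - 1) / (∑ j, a j)) ^ 2 * a i := by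
  have hNpos : (0 : ℝ) < (N : ℝ) - 1 := by
    have : (2 : ℝ) ≤ (N : ℝ) := by exact_mod_cast hN
    linarith
  set S := ∑ j, M j with hSdef
  have hS : 0 < S := Finset.sum_pos (fun i _ => hM i) ⟨⟨0, by omega⟩, mem_univ _⟩
  have key : ∀ i, S - M i = a i * S ^ 2 := by
    intro i
    have hsd : ∑ j ∈ univ \ {i}, M j = S - M i := by
      rw [Finset.sum_sdiff_eq_sub (by simp), Finset.sum_singleton]
    have := hFOC i
    rw [hsd] at this
    field_simp at this
    linarith
  have hsum : ((N : ℝ) - 1) * S = (∑ j, a j) * S ^ 2 := by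
    have h1 := Finset.sum_congr rfl (fun i (_ : i ∈ univ) => key i)
    simp [Finset.sum_sub_distrib, ← Finset.sum_mul, Finset.card_univ, mul_comm] at h1
    rw [← hSdef] at h1
    ring_nf at h1 ⊢
    linarith
  have hApos : 0 < ∑ j, a j := by
    by_contra hA
    push_neg at hA
    nlinarith [sq_nonneg S]
  have hSval : S = ((N : ℝ) - 1) / (∑ j, a j) := by
    field_simp
    nlinarith
  intro i
  have := key i
  have : M i = S - a i * S ^ 2 := by linarith
  rw [this, hSval]
  ring
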